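/- arXiv:1909.05826 — 2 statements merged into one kernel-verified Lean document; each statement's English description precedes it below -/
import Mathlib

section
/- The max-relative entropy is additive under tensor products: for positive semidefinite operators ρ₁, σ₁ on A₁ and ρ₂, σ₂ on A₂, D_max(ρ₁⊗ρ₂ ‖ σ₁⊗σ₂) = D_max(ρ₁‖σ₁) + D_max(ρ₂‖σ₂). -/
open Matrix BigOperators
open scoped ComplexOrder Classical
noncomputable section
namespace QIT
variable {n m : Type*}

def Dmax [Fintype n] (ρ σ : Matrix n n ℂ) : EReal :=
  sInf ((fun l : ℝ => (l : EReal)) '' {l : ℝ | ((2:ℝ) ^ l • σ - ρ).PosSemidef})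

def matLog [Fintype n] [DecidableEq n] (A : Matrix n n ℂ) : Matrix n n ℂ :=
  if h : A.IsHermitian then
    (h.eigenvectorUnitary : Matrix n n ℂ) *
      Matrix.diagonal (fun i => (Real.log (h.eigenvalues i) : ℂ)) *
      (star (h.eigenvectorUnitary : Matrix n n ℂ))
  else 0

def mpow [Fintype n] [DecidableEq n] (A : Matrix n n ℂ) (p : ℝ) : Matrix n n ℂ :=
  if h : A.IsHermitian then
    (h.eigenvectorUnitary : Matrix n n ℂ) *
      Matrix.diagonal (fun i => ((h.eigenvalues i ^ p : ℝ) : ℂ)) *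
      (star (h.eigenvectorUnitary : Matrix n n ℂ))
  else 0

def msqrt [Fintype n] [DecidableEq n] (A : Matrix n n ℂ) : Matrix n n ℂ :=
  if h : A.PosSemidef then
    (h.1.eigenvectorUnitary : Matrix n n ℂ) *
      Matrix.diagonal ((↑) ∘ (Real.sqrt ·) ∘ h.1.eigenvalues) *
      (star h.1.eigenvectorUnitary : Matrix n n ℂ)
  else 0

def SuppLE [Fintype n] (ρ σ : Matrix n n ℂ) : Prop :=
  ∀ v, σ.mulVec v = 0 → ρ.mulVec v = 0

def relEntR [Fintype n] [DecidableEq n] (ρ σ : Matrix n n ℂ) : ℝ :=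
  ((ρ * (matLog ρ - matLog σ)).trace).re

def relEnt [Fintype n] [DecidableEq n] (ρ σ : Matrix n n ℂ) : EReal :=
  if SuppLE ρ σ then ((relEntR ρ σ : ℝ) : EReal) else ⊤

def IsDensity [Fintype n] (ρ : Matrix n n ℂ) : Prop := ρ.PosSemidef ∧ ρ.trace = 1

def matTensorMap {k : Type*} (Φ : Matrix n n ℂ → Matrix m m ℂ)
    (M : Matrix (k × n) (k × n) ℂ) : Matrix (k × m) (k × m) ℂ :=
  fun p q => Φ (fun a b => M (p.1, a) (q.1, b)) p.2 q.2

def matTensorMapLeft {k : Type*} (Φ : Matrix n n ℂ → Matrix m m ℂ)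
    (M : Matrix (n × k) (n × k) ℂ) : Matrix (m × k) (m × k) ℂ :=
  fun p q => Φ (fun a b => M (a, p.2) (b, q.2)) p.1 q.1

def IsCP [Fintype n] [Fintype m] (Φ : Matrix n n ℂ →ₗ[ℂ] Matrix m m ℂ) : Prop :=
  ∀ (k : ℕ) (M : Matrix (Fin k × n) (Fin k × n) ℂ), M.PosSemidef →
    (matTensorMap (⇑Φ) M).PosSemidef

def IsTP [Fintype n] [Fintype m] (Φ : Matrix n n ℂ →ₗ[ℂ] Matrix m m ℂ) : Prop :=
  ∀ M, (Φ M).trace = M.trace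

def DmaxChan [Fintype n] [Fintype m] (E F : Matrix n n ℂ →ₗ[ℂ] Matrix m m ℂ) : EReal :=
  ⨆ φ : {φ : Matrix (n × n) (n × n) ℂ // IsDensity φ},
    Dmax (matTensorMap (⇑E) φ.1) (matTensorMap (⇑F) φ.1)

def DChan [Fintype n] [DecidableEq n] [Fintype m] [DecidableEq m]
    (E F : Matrix n n ℂ →ₗ[ℂ] Matrix m m ℂ) : EReal :=
  ⨆ φ : {φ : Matrix (n × n) (n × n) ℂ // IsDensity φ},
    relEnt (matTensorMap (⇑E) φ.1) (matTensorMap (⇑F) φ.1)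

def DAmort [Fintype n] [DecidableEq n] [Fintype m] [DecidableEq m]
    (E F : Matrix n n ℂ →ₗ[ℂ] Matrix m m ℂ) : EReal :=
  ⨆ r : ℕ, ⨆ φ : {φ : Matrix (Fin r × n) (Fin r × n) ℂ // IsDensity φ},
    ⨆ ω : {ω : Matrix (Fin r × n) (Fin r × n) ℂ // IsDensity ω},
      relEnt (matTensorMap (⇑E) φ.1) (matTensorMap (⇑F) ω.1) - relEnt φ.1 ω.1

def traceNorm [Fintype n] [DecidableEq n] (A : Matrix n n ℂ) : ℝ :=
  ((msqrt (Aᴴ * A)).trace).re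

def genFid [Fintype n] [DecidableEq n] (ρ σ : Matrix n n ℂ) : ℝ :=
  (traceNorm (msqrt ρ * msqrt σ) +
    Real.sqrt ((1 - ρ.trace.re) * (1 - σ.trace.re))) ^ 2

def pdist [Fintype n] [DecidableEq n] (ρ σ : Matrix n n ℂ) : ℝ :=
  Real.sqrt (1 - genFid ρ σ)

def tensorPow [Fintype n] (ρ : Matrix n n ℂ) (k : ℕ) :
    Matrix (Fin k → n) (Fin k → n) ℂ :=
  fun v w => ∏ i, ρ (v i) (w i)

def chanPow [Fintype n] [DecidableEq n] [Fintype m]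
    (E : Matrix n n ℂ →ₗ[ℂ] Matrix m m ℂ) (k : ℕ)
    (M : Matrix (Fin k → n) (Fin k → n) ℂ) : Matrix (Fin k → m) (Fin k → m) ℂ :=
  fun v w => ∑ x : Fin k → n, ∑ y : Fin k → n,
    (∏ i, E (Matrix.single (x i) (y i) 1) (v i) (w i)) * M x y


namespace DmaxAux
open scoped Kronecker

variable {N : Type*} [Fintype N]
set_option linter.unusedSectionVars false

theorem quadKron {n₁ n₂ : Type*} [Fintype n₁] [Fintype n₂] (A : Matrix n₁ n₁ ℂ) (B : Matrix n₂ n₂ ℂ)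
    (v : n₁ → ℂ) (w : n₂ → ℂ) :
    star (fun p : n₁ × n₂ => v p.1 * w p.2) ⬝ᵥ (A ⊗ₖ B) *ᵥ (fun p => v p.1 * w p.2) =
      (star v ⬝ᵥ A *ᵥ v) * (star w ⬝ᵥ B *ᵥ w) := by
  simp only [dotProduct, mulVec, Pi.star_apply, star_mul', kroneckerMap_apply,
    Fintype.sum_prod_type]
  rw [Finset.sum_mul_sum]
  refine Finset.sum_congr rfl fun i _ => Finset.sum_congr rfl fun j _ => ?_
  simp only [Finset.mul_sum, Finset.sum_mul]
  conv_rhs => rw [Finset.sum_comm]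
  exact Finset.sum_congr rfl fun k _ => Finset.sum_congr rfl fun l _ => by ring

def qf (A : Matrix N N ℂ) (v : N → ℂ) : ℝ := (star v ⬝ᵥ A *ᵥ v).re

lemma herm_qf {A : Matrix N N ℂ} (h : A.IsHermitian) (v : N → ℂ) :
    star v ⬝ᵥ A *ᵥ v = ((qf A v : ℝ) : ℂ) := by
  have key : star (star v ⬝ᵥ A *ᵥ v) = star v ⬝ᵥ A *ᵥ v := by
    calc star (star v ⬝ᵥ A *ᵥ v) = star (A *ᵥ v) ⬝ᵥ v := by rw [star_dotProduct, star_star]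
      _ = star v ᵥ* Aᴴ ⬝ᵥ v := by rw [star_mulVec]
      _ = star v ⬝ᵥ Aᴴ *ᵥ v := (dotProduct_mulVec _ _ _).symm
      _ = star v ⬝ᵥ A *ᵥ v := by rw [h]
  exact (Complex.conj_eq_iff_re.mp key).symm

lemma qf_nonneg {A : Matrix N N ℂ} (h : A.PosSemidef) (v : N → ℂ) : 0 ≤ qf A v :=
  (Complex.nonneg_iff.mp (h.dotProduct_mulVec_nonneg v)).1

lemma herm_smul {σ : Matrix N N ℂ} (c : ℝ) (h : σ.IsHermitian) : (c • σ).IsHermitian :=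
  Matrix.IsHermitian.ext fun i j => by
    simp only [Matrix.smul_apply, star_smul, star_trivial, h.apply]

lemma qf_smul_sub (c : ℝ) (σ ρ : Matrix N N ℂ) (v : N → ℂ) :
    star v ⬝ᵥ ((c • σ - ρ) *ᵥ v) =
      (c : ℂ) * (star v ⬝ᵥ σ *ᵥ v) - star v ⬝ᵥ ρ *ᵥ v := by
  rw [Matrix.sub_mulVec, dotProduct_sub, Matrix.smul_mulVec, dotProduct_smul,
    Complex.real_smul]

lemma psd_sub_iff {ρ σ : Matrix N N ℂ} (hρ : ρ.IsHermitian) (hσ : σ.IsHermitian) (c : ℝ) :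
    (c • σ - ρ).PosSemidef ↔ ∀ v, qf ρ v ≤ c * qf σ v := by
  have hherm : (c • σ - ρ).IsHermitian := (herm_smul c hσ).sub hρ
  constructor
  · intro h v
    have h0 := h.dotProduct_mulVec_nonneg v
    rw [qf_smul_sub, herm_qf hρ, herm_qf hσ] at h0
    have h0' : (0:ℂ) ≤ ((c * qf σ v - qf ρ v : ℝ) : ℂ) := by push_cast; exact h0
    have := Complex.zero_le_real.mp h0'
    linarith
  · intro h
    refine .of_dotProduct_mulVec_nonneg hherm fun v => ?_
    rw [qf_smul_sub, herm_qf hρ, herm_qf hσ]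
    have : (0:ℝ) ≤ c * qf σ v - qf ρ v := by linarith [h v]
    have h2 := Complex.zero_le_real.mpr this
    push_cast at h2
    exact h2

lemma not_psd_sub {ρ σ : Matrix N N ℂ} (hρ : ρ.IsHermitian) (hσ : σ.IsHermitian) (c : ℝ)
    (h : ¬ (c • σ - ρ).PosSemidef) : ∃ v, c * qf σ v < qf ρ v := by
  rw [psd_sub_iff hρ hσ] at h
  push_neg at h
  exact h

open scoped MatrixOrder Matrix.Norms.L2Operator in
lemma psdEx {N : Type*} [Fintype N] [DecidableEq N] {A : Matrix N N ℂ} (h : A.PosSemidef) :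
    ∃ B : Matrix N N ℂ, A = Bᴴ * B :=
  CStarAlgebra.nonneg_iff_eq_star_mul_self.mp h.nonneg

section Kron
variable {N₁ N₂ : Type*} [Fintype N₁] [Fintype N₂]

lemma kron_conjTranspose (A : Matrix N₁ N₁ ℂ) (B : Matrix N₂ N₂ ℂ) :
    (A ⊗ₖ B)ᴴ = Aᴴ ⊗ₖ Bᴴ := by
  ext p q
  simp [Matrix.conjTranspose_apply, Matrix.kroneckerMap_apply, star_mul']

lemma psd_kron {A : Matrix N₁ N₁ ℂ} {B : Matrix N₂ N₂ ℂ}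
    (hA : A.PosSemidef) (hB : B.PosSemidef) : (A ⊗ₖ B).PosSemidef := by
  obtain ⟨C, rfl⟩ := psdEx hA
  obtain ⟨D, rfl⟩ := psdEx hB
  rw [Matrix.mul_kronecker_mul, ← kron_conjTranspose]
  exact Matrix.posSemidef_conjTranspose_mul_self _

lemma qf_kron {A : Matrix N₁ N₁ ℂ} {B : Matrix N₂ N₂ ℂ}
    (hA : A.IsHermitian) (hB : B.IsHermitian) (v : N₁ → ℂ) (w : N₂ → ℂ) :
    qf (A ⊗ₖ B) (fun p => v p.1 * w p.2) = qf A v * qf B w := by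
  unfold qf
  rw [quadKron, herm_qf hA, herm_qf hB, ← Complex.ofReal_mul]
  exact Complex.ofReal_re _

end Kron

lemma psd_smul {σ : Matrix N N ℂ} (h : σ.PosSemidef) {c : ℝ} (hc : 0 ≤ c) :
    (c • σ).PosSemidef := by
  refine .of_dotProduct_mulVec_nonneg (herm_smul c h.1) fun v => ?_
  rw [Matrix.smul_mulVec, dotProduct_smul, Complex.real_smul]
  exact mul_nonneg (Complex.zero_le_real.mpr hc) (h.dotProduct_mulVec_nonneg v)

lemma exists_qf_pos [DecidableEq N] {ρ : Matrix N N ℂ} (h : ρ.PosSemidef) (hne : ρ ≠ 0) :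
    ∃ v, 0 < qf ρ v := by
  by_contra hcon
  push_neg at hcon
  apply hne
  obtain ⟨B, rfl⟩ := psdEx h
  have hB : B = 0 := by
    have hBv : ∀ v, B *ᵥ v = 0 := by
      intro v
      have him : (star v ⬝ᵥ (Bᴴ * B) *ᵥ v).im = 0 := (Complex.nonneg_iff.mp (h.dotProduct_mulVec_nonneg v)).2.symm
      have hre : (star v ⬝ᵥ (Bᴴ * B) *ᵥ v).re = 0 :=
        le_antisymm (hcon v) (qf_nonneg h v)
      have hQ : star v ⬝ᵥ (Bᴴ * B) *ᵥ v = 0 := Complex.ext hre him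
      have hfact : star v ⬝ᵥ (Bᴴ * B) *ᵥ v = star (B *ᵥ v) ⬝ᵥ (B *ᵥ v) := by
        rw [← Matrix.mulVec_mulVec, dotProduct_mulVec, ← star_mulVec]
      rw [hfact] at hQ
      exact (dotProduct_star_self_eq_zero).mp hQ
    ext i j
    have := congrFun (hBv (Pi.single j 1)) i
    rw [Matrix.mulVec_single] at this
    simpa using this
  rw [hB]
  simp

def Sset (ρ σ : Matrix N N ℂ) : Set ℝ := {l : ℝ | ((2:ℝ) ^ l • σ - ρ).PosSemidef}

lemma mem_Sset_iff {ρ σ : Matrix N N ℂ} (hρ : ρ.IsHermitian) (hσ : σ.IsHermitian) {l : ℝ} :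
    l ∈ Sset ρ σ ↔ ∀ v, qf ρ v ≤ (2:ℝ) ^ l * qf σ v :=
  psd_sub_iff hρ hσ _

lemma Sset_zero {σ : Matrix N N ℂ} (hσ : σ.PosSemidef) : Sset (0 : Matrix N N ℂ) σ = Set.univ := by
  ext l
  simp only [Sset, Set.mem_setOf_eq, Set.mem_univ, iff_true, sub_zero]
  exact psd_smul hσ (Real.rpow_nonneg (by norm_num) l)

lemma lb_Sset {ρ σ : Matrix N N ℂ} (hρ : ρ.IsHermitian) (hσ : σ.IsHermitian) {v : N → ℂ}
    (hv : 0 < qf ρ v) (hσv : 0 ≤ qf σ v) {l : ℝ} (hl : l ∈ Sset ρ σ) :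
    Real.logb 2 (qf ρ v / qf σ v) ≤ l := by
  have hq := (mem_Sset_iff hρ hσ).mp hl v
  have h2l : (0:ℝ) < (2:ℝ) ^ l := Real.rpow_pos_of_pos (by norm_num) l
  have hσv' : 0 < qf σ v := by nlinarith
  rw [Real.logb_le_iff_le_rpow one_lt_two (div_pos hv hσv')]
  rw [div_le_iff₀ hσv']
  linarith

section Kron2
variable {N₁ N₂ : Type*} [Fintype N₁] [Fintype N₂]

lemma add_mem_Sset {ρ₁ σ₁ : Matrix N₁ N₁ ℂ} {ρ₂ σ₂ : Matrix N₂ N₂ ℂ}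
    (hρ₁ : ρ₁.PosSemidef) (hσ₂ : σ₂.PosSemidef) {l₁ l₂ : ℝ}
    (h₁ : l₁ ∈ Sset ρ₁ σ₁) (h₂ : l₂ ∈ Sset ρ₂ σ₂) :
    l₁ + l₂ ∈ Sset (ρ₁ ⊗ₖ ρ₂) (σ₁ ⊗ₖ σ₂) := by
  have key : (2:ℝ) ^ (l₁ + l₂) • (σ₁ ⊗ₖ σ₂) - ρ₁ ⊗ₖ ρ₂ =
      ((2:ℝ) ^ l₁ • σ₁ - ρ₁) ⊗ₖ ((2:ℝ) ^ l₂ • σ₂) + ρ₁ ⊗ₖ ((2:ℝ) ^ l₂ • σ₂ - ρ₂) := by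
    ext p q
    simp only [Matrix.add_apply, Matrix.sub_apply, Matrix.smul_apply, Matrix.kroneckerMap_apply,
      smul_eq_mul, Complex.real_smul]
    rw [Real.rpow_add (by norm_num : (0:ℝ) < 2)]
    push_cast
    ring
  show ((2:ℝ) ^ (l₁ + l₂) • (σ₁ ⊗ₖ σ₂) - ρ₁ ⊗ₖ ρ₂).PosSemidef
  rw [key]
  exact (psd_kron h₁ (psd_smul hσ₂ (Real.rpow_nonneg (by norm_num) l₂))).add (psd_kron hρ₁ h₂)

lemma Sset_nonempty_right {ρ₁ σ₁ : Matrix N₁ N₁ ℂ} {ρ₂ σ₂ : Matrix N₂ N₂ ℂ}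
    (hρ₁ : ρ₁.PosSemidef) (hσ₁ : σ₁.PosSemidef) (hρ₂ : ρ₂.PosSemidef) (hσ₂ : σ₂.PosSemidef)
    {v₁ : N₁ → ℂ} (hv₁ : 0 < qf ρ₁ v₁) {l : ℝ}
    (hl : l ∈ Sset (ρ₁ ⊗ₖ ρ₂) (σ₁ ⊗ₖ σ₂)) : (Sset ρ₂ σ₂).Nonempty := by
  set c : ℝ := (2:ℝ) ^ l * qf σ₁ v₁ / qf ρ₁ v₁ with hc
  have h2l : (0:ℝ) < (2:ℝ) ^ l := Real.rpow_pos_of_pos (by norm_num) l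
  have hc0 : 0 ≤ c := div_nonneg (mul_nonneg h2l.le (qf_nonneg hσ₁ v₁)) hv₁.le
  refine ⟨Real.logb 2 (c + 1), ?_⟩
  rw [mem_Sset_iff hρ₂.1 hσ₂.1]
  intro v₂
  have hkey := (mem_Sset_iff (psd_kron hρ₁ hρ₂).1 (psd_kron hσ₁ hσ₂).1).mp hl
    (fun p => v₁ p.1 * v₂ p.2)
  rw [qf_kron hρ₁.1 hρ₂.1, qf_kron hσ₁.1 hσ₂.1] at hkey
  have h2 : (2:ℝ) ^ Real.logb 2 (c + 1) = c + 1 :=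
    Real.rpow_logb (by norm_num) (by norm_num) (by linarith)
  rw [h2]
  have hcr : c * qf ρ₁ v₁ = (2:ℝ) ^ l * qf σ₁ v₁ := by
    rw [hc]; field_simp
  have hσ₂v := qf_nonneg hσ₂ v₂
  have step : qf ρ₂ v₂ * qf ρ₁ v₁ ≤ (c * qf σ₂ v₂) * qf ρ₁ v₁ := by nlinarith
  have hr₂ : qf ρ₂ v₂ ≤ c * qf σ₂ v₂ := le_of_mul_le_mul_right step hv₁
  nlinarith

lemma Sset_nonempty_left {ρ₁ σ₁ : Matrix N₁ N₁ ℂ} {ρ₂ σ₂ : Matrix N₂ N₂ ℂ}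
    (hρ₁ : ρ₁.PosSemidef) (hσ₁ : σ₁.PosSemidef) (hρ₂ : ρ₂.PosSemidef) (hσ₂ : σ₂.PosSemidef)
    {v₂ : N₂ → ℂ} (hv₂ : 0 < qf ρ₂ v₂) {l : ℝ}
    (hl : l ∈ Sset (ρ₁ ⊗ₖ ρ₂) (σ₁ ⊗ₖ σ₂)) : (Sset ρ₁ σ₁).Nonempty := by
  set c : ℝ := (2:ℝ) ^ l * qf σ₂ v₂ / qf ρ₂ v₂ with hc
  have h2l : (0:ℝ) < (2:ℝ) ^ l := Real.rpow_pos_of_pos (by norm_num) l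
  have hc0 : 0 ≤ c := div_nonneg (mul_nonneg h2l.le (qf_nonneg hσ₂ v₂)) hv₂.le
  refine ⟨Real.logb 2 (c + 1), ?_⟩
  rw [mem_Sset_iff hρ₁.1 hσ₁.1]
  intro v₁
  have hkey := (mem_Sset_iff (psd_kron hρ₁ hρ₂).1 (psd_kron hσ₁ hσ₂).1).mp hl
    (fun p => v₁ p.1 * v₂ p.2)
  rw [qf_kron hρ₁.1 hρ₂.1, qf_kron hσ₁.1 hσ₂.1] at hkey
  have h2 : (2:ℝ) ^ Real.logb 2 (c + 1) = c + 1 :=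
    Real.rpow_logb (by norm_num) (by norm_num) (by linarith)
  rw [h2]
  have hcr : c * qf ρ₂ v₂ = (2:ℝ) ^ l * qf σ₂ v₂ := by
    rw [hc]; field_simp
  have hσ₁v := qf_nonneg hσ₁ v₁
  have step : qf ρ₁ v₁ * qf ρ₂ v₂ ≤ (c * qf σ₁ v₁) * qf ρ₂ v₂ := by nlinarith
  have hr₁ : qf ρ₁ v₁ ≤ c * qf σ₁ v₁ := le_of_mul_le_mul_right step hv₂
  nlinarith

end Kron2

lemma ereal_sInf_coe {S : Set ℝ} (hne : S.Nonempty) (hbdd : BddBelow S) :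
    sInf ((fun l : ℝ => (l : EReal)) '' S) = ((sInf S : ℝ) : EReal) :=
  (Monotone.map_csInf_of_continuousAt (continuous_coe_real_ereal.continuousAt)
    (fun _ _ h => EReal.coe_le_coe_iff.mpr h) hne hbdd).symm

lemma ereal_sInf_univ : sInf ((fun l : ℝ => (l : EReal)) '' (Set.univ : Set ℝ)) = ⊥ := by
  rw [EReal.eq_bot_iff_forall_lt]
  intro y
  calc sInf ((fun l : ℝ => (l : EReal)) '' (Set.univ : Set ℝ))
      ≤ ((y - 1 : ℝ) : EReal) := sInf_le ⟨y - 1, trivial, rfl⟩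
    _ < (y : EReal) := by exact_mod_cast (by linarith : (y:ℝ) - 1 < y)

lemma ereal_sInf_ne_bot {S : Set ℝ} {b : ℝ} (hb : ∀ x ∈ S, b ≤ x) :
    sInf ((fun l : ℝ => (l : EReal)) '' S) ≠ ⊥ := by
  have hle : (b : EReal) ≤ sInf ((fun l : ℝ => (l : EReal)) '' S) := by
    refine le_sInf ?_
    rintro e ⟨x, hx, rfl⟩
    exact EReal.coe_le_coe_iff.mpr (hb x hx)
  intro h
  rw [h] at hle
  exact (EReal.coe_ne_bot b) (le_bot_iff.mp hle)

section Main
variable {N₁ N₂ : Type*} [Fintype N₁] [Fintype N₂]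

lemma sInf_Sset_add {ρ₁ σ₁ : Matrix N₁ N₁ ℂ} {ρ₂ σ₂ : Matrix N₂ N₂ ℂ}
    (hρ₁ : ρ₁.PosSemidef) (hσ₁ : σ₁.PosSemidef) (hρ₂ : ρ₂.PosSemidef) (hσ₂ : σ₂.PosSemidef)
    {v₁ : N₁ → ℂ} (hv₁ : 0 < qf ρ₁ v₁) {v₂ : N₂ → ℂ} (hv₂ : 0 < qf ρ₂ v₂)
    (hne : (Sset (ρ₁ ⊗ₖ ρ₂) (σ₁ ⊗ₖ σ₂)).Nonempty) :
    sInf (Sset (ρ₁ ⊗ₖ ρ₂) (σ₁ ⊗ₖ σ₂)) = sInf (Sset ρ₁ σ₁) + sInf (Sset ρ₂ σ₂) := by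
  obtain ⟨l₀, hl₀⟩ := hne
  have hne₁ : (Sset ρ₁ σ₁).Nonempty := Sset_nonempty_left hρ₁ hσ₁ hρ₂ hσ₂ hv₂ hl₀
  have hne₂ : (Sset ρ₂ σ₂).Nonempty := Sset_nonempty_right hρ₁ hσ₁ hρ₂ hσ₂ hv₁ hl₀
  have bdd₁ : BddBelow (Sset ρ₁ σ₁) :=
    ⟨_, fun x hx => lb_Sset hρ₁.1 hσ₁.1 hv₁ (qf_nonneg hσ₁ v₁) hx⟩
  have bdd₂ : BddBelow (Sset ρ₂ σ₂) :=
    ⟨_, fun x hx => lb_Sset hρ₂.1 hσ₂.1 hv₂ (qf_nonneg hσ₂ v₂) hx⟩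
  have hv₁₂ : 0 < qf (ρ₁ ⊗ₖ ρ₂) (fun p => v₁ p.1 * v₂ p.2) := by
    rw [qf_kron hρ₁.1 hρ₂.1]; exact mul_pos hv₁ hv₂
  have hσ₁₂ : 0 ≤ qf (σ₁ ⊗ₖ σ₂) (fun p => v₁ p.1 * v₂ p.2) := qf_nonneg (psd_kron hσ₁ hσ₂) _
  have bdd₁₂ : BddBelow (Sset (ρ₁ ⊗ₖ ρ₂) (σ₁ ⊗ₖ σ₂)) :=
    ⟨_, fun x hx => lb_Sset (psd_kron hρ₁ hρ₂).1 (psd_kron hσ₁ hσ₂).1 hv₁₂ hσ₁₂ hx⟩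
  set a₁ := sInf (Sset ρ₁ σ₁)
  set a₂ := sInf (Sset ρ₂ σ₂)
  apply le_antisymm
  · -- ≤
    have key : ∀ ε : ℝ, 0 < ε → sInf (Sset (ρ₁ ⊗ₖ ρ₂) (σ₁ ⊗ₖ σ₂)) ≤ a₁ + a₂ + ε := by
      intro ε hε
      obtain ⟨l₁, hl₁, hl₁'⟩ := (csInf_lt_iff bdd₁ hne₁).mp
        (by linarith : a₁ < a₁ + ε / 2)
      obtain ⟨l₂, hl₂, hl₂'⟩ := (csInf_lt_iff bdd₂ hne₂).mp
        (by linarith : a₂ < a₂ + ε / 2)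
      calc sInf (Sset (ρ₁ ⊗ₖ ρ₂) (σ₁ ⊗ₖ σ₂)) ≤ l₁ + l₂ :=
            csInf_le bdd₁₂ (add_mem_Sset hρ₁ hσ₂ hl₁ hl₂)
        _ ≤ a₁ + a₂ + ε := by linarith
    by_contra hcon
    push_neg at hcon
    have := key ((sInf (Sset (ρ₁ ⊗ₖ ρ₂) (σ₁ ⊗ₖ σ₂)) - (a₁ + a₂)) / 2) (by linarith)
    linarith
  · -- ≥
    refine le_csInf ⟨l₀, hl₀⟩ fun l hl => ?_
    have key : ∀ ε : ℝ, 0 < ε → a₁ ≤ l - a₂ + ε := by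
      intro ε hε
      have hnotmem : a₂ - ε ∉ Sset ρ₂ σ₂ := fun hmem => by
        have := csInf_le bdd₂ hmem; linarith
      obtain ⟨w₂, hw₂⟩ := not_psd_sub hρ₂.1 hσ₂.1 ((2:ℝ) ^ (a₂ - ε)) hnotmem
      have hB : (0:ℝ) < (2:ℝ) ^ (a₂ - ε) := Real.rpow_pos_of_pos (by norm_num) _
      have hr₂pos : 0 < qf ρ₂ w₂ :=
        lt_of_le_of_lt (mul_nonneg hB.le (qf_nonneg hσ₂ w₂)) hw₂
      have hmem1 : l - a₂ + ε ∈ Sset ρ₁ σ₁ := by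
        rw [mem_Sset_iff hρ₁.1 hσ₁.1]
        intro u₁
        have hkey := (mem_Sset_iff (psd_kron hρ₁ hρ₂).1 (psd_kron hσ₁ hσ₂).1).mp hl
          (fun p => u₁ p.1 * w₂ p.2)
        rw [qf_kron hρ₁.1 hρ₂.1, qf_kron hσ₁.1 hσ₂.1] at hkey
        have hA : (0:ℝ) < (2:ℝ) ^ (l - a₂ + ε) := Real.rpow_pos_of_pos (by norm_num) _
        have hs₁ : 0 ≤ qf σ₁ u₁ := qf_nonneg hσ₁ u₁
        have hs₂' : qf σ₂ w₂ * (2:ℝ) ^ (a₂ - ε) ≤ qf ρ₂ w₂ := by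
          rw [mul_comm]; exact hw₂.le
        have e1 : (2:ℝ) ^ (l - a₂ + ε) * (2:ℝ) ^ (a₂ - ε) = (2:ℝ) ^ l := by
          rw [← Real.rpow_add (by norm_num : (0:ℝ) < 2)]; ring_nf
        rw [← e1] at hkey
        have hmul : qf ρ₁ u₁ * qf ρ₂ w₂ ≤ ((2:ℝ) ^ (l - a₂ + ε) * qf σ₁ u₁) * qf ρ₂ w₂ := by
          nlinarith [mul_le_mul_of_nonneg_left hs₂' (mul_nonneg hA.le hs₁)]
        exact le_of_mul_le_mul_right hmul hr₂pos
      have := csInf_le bdd₁ hmem1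
      linarith
    have h12 : a₁ ≤ l - a₂ := by
      by_contra hcon
      push_neg at hcon
      have := key ((a₁ - (l - a₂)) / 2) (by linarith)
      linarith
    linarith

end Main

end DmaxAux

open scoped Kronecker

/-- **Additivity of the max-relative entropy under tensor (Kronecker) products.**
For positive semidefinite `ρ₁, σ₁` on `A₁` and `ρ₂, σ₂` on `A₂`,
`D_max(ρ₁ ⊗ ρ₂ ‖ σ₁ ⊗ σ₂) = D_max(ρ₁‖σ₁) + D_max(ρ₂‖σ₂)`. -/
theorem Dmax_additive_tensor {n₁ n₂ : Type*} [Fintype n₁] [Fintype n₂]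
    (ρ₁ σ₁ : Matrix n₁ n₁ ℂ) (ρ₂ σ₂ : Matrix n₂ n₂ ℂ)
    (hρ₁ : ρ₁.PosSemidef) (hσ₁ : σ₁.PosSemidef)
    (hρ₂ : ρ₂.PosSemidef) (hσ₂ : σ₂.PosSemidef) :
    Dmax (ρ₁ ⊗ₖ ρ₂) (σ₁ ⊗ₖ σ₂) = Dmax ρ₁ σ₁ + Dmax ρ₂ σ₂ := by
  classical
  have hdef₁ : Dmax ρ₁ σ₁ = sInf ((fun l : ℝ => (l : EReal)) '' DmaxAux.Sset ρ₁ σ₁) := rfl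
  have hdef₂ : Dmax ρ₂ σ₂ = sInf ((fun l : ℝ => (l : EReal)) '' DmaxAux.Sset ρ₂ σ₂) := rfl
  have hdef₁₂ : Dmax (ρ₁ ⊗ₖ ρ₂) (σ₁ ⊗ₖ σ₂) =
      sInf ((fun l : ℝ => (l : EReal)) '' DmaxAux.Sset (ρ₁ ⊗ₖ ρ₂) (σ₁ ⊗ₖ σ₂)) := rfl
  by_cases hz₁ : ρ₁ = 0
  · subst hz₁
    rw [Matrix.zero_kronecker]
    have hL : Dmax (0 : Matrix (n₁ × n₂) (n₁ × n₂) ℂ) (σ₁ ⊗ₖ σ₂) = ⊥ := by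
      show sInf ((fun l : ℝ => (l : EReal)) ''
        DmaxAux.Sset (0 : Matrix (n₁ × n₂) (n₁ × n₂) ℂ) (σ₁ ⊗ₖ σ₂)) = ⊥
      rw [DmaxAux.Sset_zero (DmaxAux.psd_kron hσ₁ hσ₂)]
      exact DmaxAux.ereal_sInf_univ
    have hR : Dmax (0 : Matrix n₁ n₁ ℂ) σ₁ = ⊥ := by
      show sInf ((fun l : ℝ => (l : EReal)) '' DmaxAux.Sset (0 : Matrix n₁ n₁ ℂ) σ₁) = ⊥
      rw [DmaxAux.Sset_zero hσ₁]
      exact DmaxAux.ereal_sInf_univ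
    rw [hL, hR, EReal.bot_add]
  by_cases hz₂ : ρ₂ = 0
  · subst hz₂
    rw [Matrix.kronecker_zero]
    have hL : Dmax (0 : Matrix (n₁ × n₂) (n₁ × n₂) ℂ) (σ₁ ⊗ₖ σ₂) = ⊥ := by
      show sInf ((fun l : ℝ => (l : EReal)) ''
        DmaxAux.Sset (0 : Matrix (n₁ × n₂) (n₁ × n₂) ℂ) (σ₁ ⊗ₖ σ₂)) = ⊥
      rw [DmaxAux.Sset_zero (DmaxAux.psd_kron hσ₁ hσ₂)]
      exact DmaxAux.ereal_sInf_univ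
    have hR : Dmax (0 : Matrix n₂ n₂ ℂ) σ₂ = ⊥ := by
      show sInf ((fun l : ℝ => (l : EReal)) '' DmaxAux.Sset (0 : Matrix n₂ n₂ ℂ) σ₂) = ⊥
      rw [DmaxAux.Sset_zero hσ₂]
      exact DmaxAux.ereal_sInf_univ
    rw [hL, hR, EReal.add_bot]
  obtain ⟨v₁, hv₁⟩ := DmaxAux.exists_qf_pos hρ₁ hz₁
  obtain ⟨v₂, hv₂⟩ := DmaxAux.exists_qf_pos hρ₂ hz₂
  have hDmax₁_ne_bot : Dmax ρ₁ σ₁ ≠ ⊥ := by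
    rw [hdef₁]
    exact DmaxAux.ereal_sInf_ne_bot
      (fun x hx => DmaxAux.lb_Sset hρ₁.1 hσ₁.1 hv₁ (DmaxAux.qf_nonneg hσ₁ v₁) hx)
  have hDmax₂_ne_bot : Dmax ρ₂ σ₂ ≠ ⊥ := by
    rw [hdef₂]
    exact DmaxAux.ereal_sInf_ne_bot
      (fun x hx => DmaxAux.lb_Sset hρ₂.1 hσ₂.1 hv₂ (DmaxAux.qf_nonneg hσ₂ v₂) hx)
  by_cases hS : (DmaxAux.Sset (ρ₁ ⊗ₖ ρ₂) (σ₁ ⊗ₖ σ₂)).Nonempty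
  · -- main case
    obtain ⟨l₀, hl₀⟩ := hS
    have hne₁ : (DmaxAux.Sset ρ₁ σ₁).Nonempty :=
      DmaxAux.Sset_nonempty_left hρ₁ hσ₁ hρ₂ hσ₂ hv₂ hl₀
    have hne₂ : (DmaxAux.Sset ρ₂ σ₂).Nonempty :=
      DmaxAux.Sset_nonempty_right hρ₁ hσ₁ hρ₂ hσ₂ hv₁ hl₀
    have bdd₁ : BddBelow (DmaxAux.Sset ρ₁ σ₁) :=
      ⟨_, fun x hx => DmaxAux.lb_Sset hρ₁.1 hσ₁.1 hv₁ (DmaxAux.qf_nonneg hσ₁ v₁) hx⟩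
    have bdd₂ : BddBelow (DmaxAux.Sset ρ₂ σ₂) :=
      ⟨_, fun x hx => DmaxAux.lb_Sset hρ₂.1 hσ₂.1 hv₂ (DmaxAux.qf_nonneg hσ₂ v₂) hx⟩
    have hv₁₂ : 0 < DmaxAux.qf (ρ₁ ⊗ₖ ρ₂) (fun p => v₁ p.1 * v₂ p.2) := by
      rw [DmaxAux.qf_kron hρ₁.1 hρ₂.1]; exact mul_pos hv₁ hv₂
    have bdd₁₂ : BddBelow (DmaxAux.Sset (ρ₁ ⊗ₖ ρ₂) (σ₁ ⊗ₖ σ₂)) :=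
      ⟨_, fun x hx => DmaxAux.lb_Sset (DmaxAux.psd_kron hρ₁ hρ₂).1
        (DmaxAux.psd_kron hσ₁ hσ₂).1 hv₁₂
        (DmaxAux.qf_nonneg (DmaxAux.psd_kron hσ₁ hσ₂) _) hx⟩
    rw [hdef₁, hdef₂, hdef₁₂,
      DmaxAux.ereal_sInf_coe ⟨l₀, hl₀⟩ bdd₁₂, DmaxAux.ereal_sInf_coe hne₁ bdd₁,
      DmaxAux.ereal_sInf_coe hne₂ bdd₂, ← EReal.coe_add]
    exact_mod_cast DmaxAux.sInf_Sset_add hρ₁ hσ₁ hρ₂ hσ₂ hv₁ hv₂ ⟨l₀, hl₀⟩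
  · -- empty product set
    have hLtop : Dmax (ρ₁ ⊗ₖ ρ₂) (σ₁ ⊗ₖ σ₂) = ⊤ := by
      rw [hdef₁₂, Set.not_nonempty_iff_eq_empty.mp hS]
      simp
    rw [hLtop]
    have hsplit : ¬ (DmaxAux.Sset ρ₁ σ₁).Nonempty ∨ ¬ (DmaxAux.Sset ρ₂ σ₂).Nonempty := by
      by_contra hcon
      push_neg at hcon
      obtain ⟨⟨l₁, hl₁⟩, ⟨l₂, hl₂⟩⟩ := hcon
      exact hS ⟨l₁ + l₂, DmaxAux.add_mem_Sset hρ₁ hσ₂ hl₁ hl₂⟩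
    rcases hsplit with h1 | h2
    · have : Dmax ρ₁ σ₁ = ⊤ := by
        rw [hdef₁, Set.not_nonempty_iff_eq_empty.mp h1]
        simp
      rw [this, EReal.top_add_of_ne_bot hDmax₂_ne_bot]
    · have : Dmax ρ₂ σ₂ = ⊤ := by
        rw [hdef₂, Set.not_nonempty_iff_eq_empty.mp h2]
        simp
      rw [this, EReal.add_top_of_ne_bot hDmax₁_ne_bot]

end QIT
end
end

section
/- For the stabilized channel max-relative entropy, the optimization over input states reduces to the Choi operators: D_max(E‖F) = D_max(J^E ‖ J^F), where J^E, J^F are the (unnormalized) Choi operators of E and F. -/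
open Matrix BigOperators
open scoped ComplexOrder Classical
noncomputable section
namespace QIT
variable {n m : Type*}

/-- The unnormalized maximally entangled operator `|Ω⟩⟨Ω|` with `|Ω⟩ = Σᵢ |i⟩|i⟩`. -/
def omegaProj (n : Type*) [DecidableEq n] : Matrix (n × n) (n × n) ℂ :=
  fun p q => if p.1 = p.2 ∧ q.1 = q.2 then 1 else 0

/-- The (unnormalized) Choi operator `J^Φ = (id ⊗ Φ)(|Ω⟩⟨Ω|)`. -/
def choi {n m : Type*} [DecidableEq n] (Φ : Matrix n n ℂ → Matrix m m ℂ) :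
    Matrix (n × m) (n × m) ℂ :=
  matTensorMap Φ (omegaProj n)


-- ===== auxiliary lemmas =====

lemma psd_zero {α : Type*} [Fintype α] : (0 : Matrix α α ℂ).PosSemidef :=
  ⟨Matrix.isHermitian_zero, fun x => by simp⟩

lemma psd_add {α : Type*} [Fintype α] {A B : Matrix α α ℂ} (hA : A.PosSemidef)
    (hB : B.PosSemidef) : (A + B).PosSemidef :=
  hA.add hB

lemma psd_sum {α ι : Type*} [Fintype α] [Fintype ι] (f : ι → Matrix α α ℂ)
    (h : ∀ i, (f i).PosSemidef) : (∑ i, f i).PosSemidef :=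
  Finset.sum_induction f _ (fun _ _ ha hb => psd_add ha hb) psd_zero (fun i _ => h i)

lemma real_smul_matrix {α β : Type*} (r : ℝ) (M : Matrix α β ℂ) :
    r • M = (r : ℂ) • M := by
  rw [← algebraMap_smul ℂ r M, Complex.coe_algebraMap]

lemma psd_smul {α : Type*} [Fintype α] {M : Matrix α α ℂ} (hM : M.PosSemidef)
    {c : ℝ} (hc : 0 ≤ c) : ((c : ℂ) • M).PosSemidef := by
  constructor
  · have h1 : ((c:ℂ) • M)ᴴ = star (c:ℂ) • Mᴴ := Matrix.conjTranspose_smul (c:ℂ) M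
    rw [Matrix.IsHermitian, h1, hM.1.eq, Complex.star_def, Complex.conj_ofReal]
  · intro x
    exact (hM.smul (a := (c:ℂ)) (by exact_mod_cast Complex.zero_le_real.mpr hc)).2 x

lemma psd_smul_iff {α : Type*} [Fintype α] {M : Matrix α α ℂ} {c : ℝ} (hc : 0 < c) :
    ((c : ℂ) • M).PosSemidef ↔ M.PosSemidef := by
  constructor
  · intro h
    have h2 := psd_smul h (c := c⁻¹) (le_of_lt (inv_pos.mpr hc))
    rwa [smul_smul, ← Complex.ofReal_mul, inv_mul_cancel₀ hc.ne', Complex.ofReal_one,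
      one_smul] at h2
  · exact fun h => psd_smul h hc.le

lemma sum_sum_delta {α β : Type*} [Fintype α] [Fintype β] [DecidableEq α] [DecidableEq β]
    (f : α → β → ℂ) (x : α) (y : β) :
    ∑ a' : α, ∑ c' : β, (if a' = x ∧ c' = y then f a' c' else 0) = f x y := by
  have h : ∀ a' : α, ∑ c' : β, (if a' = x ∧ c' = y then f a' c' else 0) =
      if a' = x then f a' y else 0 := by
    intro a'
    by_cases h : a' = x
    · simp [h]
    · simp [h]
  simp [h]

lemma choi_entry [Fintype n] [DecidableEq n] [Fintype m]
    (Φ : Matrix n n ℂ →ₗ[ℂ] Matrix m m ℂ) (a c : n) (b d : m) :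
    choi (⇑Φ) (a, b) (c, d) = Φ (Matrix.single a c (1:ℂ)) b d := rfl

/-- Choi's theorem direction: a PSD Choi operator gives a (one-sided) completely
positive action on states with ancilla `n`. -/
lemma matTensorMap_psd [Fintype n] [DecidableEq n] [Fintype m]
    (Φ : Matrix n n ℂ →ₗ[ℂ] Matrix m m ℂ) (hJ : (choi (⇑Φ)).PosSemidef)
    {M : Matrix (n × n) (n × n) ℂ} (hM : M.PosSemidef) :
    (matTensorMap (⇑Φ) M).PosSemidef := by
  obtain ⟨B, rfl⟩ : ∃ B : Matrix (n × n) (n × n) ℂ, M = Bᴴ * B := by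
    open scoped MatrixOrder in
    obtain ⟨X, hX, -, rfl⟩ :=
      CFC.exists_sqrt_of_isSelfAdjoint_of_quasispectrumRestricts hM.isHermitian
        (QuasispectrumRestricts.nnreal_of_nonneg hM.nonneg)
    exact ⟨X, by rw [← Matrix.star_eq_conjTranspose, hX.star_eq]⟩
  set A : (n × n) → Matrix (n × m) (n × m) ℂ :=
    fun j => Matrix.of fun p q =>
      star (B j (p.1, q.1)) * (if p.2 = q.2 then (1:ℂ) else 0) with hAdef
  have key : matTensorMap (⇑Φ) (Bᴴ * B) = ∑ j : n × n, A j * choi (⇑Φ) * (A j)ᴴ := by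
    ext ⟨a, b⟩ ⟨c, d⟩
    have hinner : (fun x y => (Bᴴ * B) (a, x) (c, y) : Matrix n n ℂ) =
        ∑ j : n × n, ∑ a' : n, ∑ c' : n,
          (star (B j (a, a')) * B j (c, c')) • Matrix.single a' c' (1:ℂ) := by
      ext x y
      simp only [Matrix.sum_apply, Matrix.smul_apply, Matrix.single,
        Matrix.of_apply, smul_eq_mul, mul_ite, mul_one, mul_zero, sum_sum_delta]
      rw [Matrix.mul_apply]
      simp only [Matrix.conjTranspose_apply]
    have lhs_eq : matTensorMap (⇑Φ) (Bᴴ * B) (a, b) (c, d) =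
        ∑ j : n × n, ∑ a' : n, ∑ c' : n,
          (star (B j (a, a')) * B j (c, c')) * Φ (Matrix.single a' c' (1:ℂ)) b d := by
      show Φ (fun x y => (Bᴴ * B) (a, x) (c, y)) b d = _
      rw [hinner]
      simp only [map_sum, _root_.map_smul, Matrix.sum_apply, Matrix.smul_apply, smul_eq_mul]
    rw [lhs_eq, Matrix.sum_apply]
    refine Finset.sum_congr rfl fun j _ => ?_
    have hR : (A j * choi (⇑Φ) * (A j)ᴴ) (a, b) (c, d) =
        ∑ a' : n, ∑ c' : n,
          (star (B j (a, a')) * B j (c, c')) * choi (⇑Φ) (a', b) (c', d) := by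
      simp only [Matrix.mul_apply, Matrix.conjTranspose_apply, hAdef, Matrix.of_apply,
        Fintype.sum_prod_type, mul_ite, ite_mul, mul_one, mul_zero, one_mul, zero_mul,
        apply_ite star, star_zero, star_star,
        Finset.sum_ite_eq, Finset.sum_ite_eq', Finset.mem_univ, if_true,
        Finset.sum_mul, Finset.mul_sum]
      rw [Finset.sum_comm]
      refine Finset.sum_congr rfl fun a' _ => Finset.sum_congr rfl fun c' _ => ?_
      ring
    rw [hR]
    refine Finset.sum_congr rfl fun a' _ => Finset.sum_congr rfl fun c' _ => ?_
    rw [choi_entry]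
  rw [key]
  exact psd_sum _ fun j => hJ.mul_mul_conjTranspose_same (A j)

lemma omegaProj_psd [Fintype n] [DecidableEq n] : (omegaProj n).PosSemidef := by
  have h : omegaProj n =
      (Matrix.of fun (_ : Unit) (p : n × n) => if p.1 = p.2 then (1:ℂ) else 0)ᴴ *
      (Matrix.of fun (_ : Unit) (p : n × n) => if p.1 = p.2 then (1:ℂ) else 0) := by
    ext p q
    simp [omegaProj, Matrix.mul_apply, Matrix.conjTranspose_apply, apply_ite star,
      ite_and, mul_ite, ite_mul, mul_one, mul_zero, one_mul, zero_mul]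
    by_cases h1 : p.1 = p.2 <;> by_cases h2 : q.1 = q.2 <;> simp [h1, h2]
  rw [h]
  exact Matrix.posSemidef_conjTranspose_mul_self _

lemma trace_omegaProj [Fintype n] [DecidableEq n] :
    (omegaProj n).trace = (Fintype.card n : ℂ) := by
  simp only [Matrix.trace, Matrix.diag, omegaProj, and_self]
  rw [Fintype.sum_prod_type]
  simp [Finset.sum_ite_eq, Finset.sum_ite_eq']

lemma matTensorMap_sub_smul {k : Type*} [Fintype n] [Fintype m] (c : ℂ)
    (E F : Matrix n n ℂ →ₗ[ℂ] Matrix m m ℂ) (M : Matrix (k × n) (k × n) ℂ) :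
    matTensorMap (⇑(c • F - E)) M = c • matTensorMap (⇑F) M - matTensorMap (⇑E) M := by
  ext p q
  simp [matTensorMap, Matrix.sub_apply, Matrix.smul_apply, LinearMap.sub_apply,
    LinearMap.smul_apply, smul_eq_mul]
  rfl

lemma matTensorMap_csmul {k : Type*} [Fintype n] [Fintype m] (c : ℂ)
    (Φ : Matrix n n ℂ →ₗ[ℂ] Matrix m m ℂ) (M : Matrix (k × n) (k × n) ℂ) :
    matTensorMap (⇑Φ) (c • M) = c • matTensorMap (⇑Φ) M := by
  ext p q
  have h : (fun a b => (c • M) (p.1, a) (q.1, b)) =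
      c • (fun a b => M (p.1, a) (q.1, b) : Matrix n n ℂ) := rfl
  show Φ (fun a b => (c • M) (p.1, a) (q.1, b)) p.2 q.2 = _
  rw [h]
  exact (congrArg (fun Y : Matrix m m ℂ => Y p.2 q.2)
    (Φ.map_smul c (fun a b => M (p.1, a) (q.1, b) : Matrix n n ℂ))).trans rfl

lemma Dmax_smul {α : Type*} [Fintype α] {c : ℝ} (hc : 0 < c) (ρ σ : Matrix α α ℂ) :
    Dmax ((c : ℂ) • ρ) ((c : ℂ) • σ) = Dmax ρ σ := by
  unfold Dmax
  have hset : {l : ℝ | ((2:ℝ)^l • ((c:ℂ) • σ) - (c:ℂ) • ρ).PosSemidef} =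
      {l : ℝ | ((2:ℝ)^l • σ - ρ).PosSemidef} := by
    ext l
    have h2 : (2:ℝ)^l • ((c:ℂ) • σ) - (c:ℂ) • ρ = (c:ℂ) • ((2:ℝ)^l • σ - ρ) := by
      rw [smul_sub, smul_comm]
    simp only [Set.mem_setOf_eq, h2, psd_smul_iff hc]
  rw [hset]

/-- **The stabilized channel max-relative entropy reduces to the Choi operators:**
`D_max(E‖F) = D_max(J^E ‖ J^F)` for `E` trace-preserving completely positive and
`F` completely positive. -/
theorem DmaxChan_eq_Dmax_choi {n m : Type*} [Fintype n] [DecidableEq n] [Fintype m]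
    (E F : Matrix n n ℂ →ₗ[ℂ] Matrix m m ℂ)
    (hE : IsCP E) (hETP : IsTP E) (hF : IsCP F) :
    DmaxChan E F = Dmax (choi (⇑E)) (choi (⇑F)) := by
  rcases isEmpty_or_nonempty n with hn | hn
  · -- degenerate case: `n` is empty
    haveI : IsEmpty (n × n) := ⟨fun p => hn.false p.1⟩
    haveI : IsEmpty (n × m) := ⟨fun p => hn.false p.1⟩
    haveI hempty : IsEmpty {φ : Matrix (n × n) (n × n) ℂ // IsDensity φ} := by
      constructor
      rintro ⟨φ, hpsd, htr⟩
      have h0 : φ.trace = 0 := by simp [Matrix.trace]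
      rw [h0] at htr
      exact one_ne_zero htr.symm
    have hL : DmaxChan E F = ⊥ := by
      rw [DmaxChan]; exact iSup_of_empty _
    rw [hL]
    symm
    unfold Dmax
    have hall : {l : ℝ | ((2:ℝ)^l • choi (⇑F) - choi (⇑E)).PosSemidef} = Set.univ := by
      ext l
      simp only [Set.mem_setOf_eq, Set.mem_univ, iff_true]
      constructor
      · ext p q
        exact isEmptyElim p
      · intro x
        simp [Subsingleton.elim x 0]
    rw [hall]
    rw [sInf_eq_bot]
    intro b hb
    induction b using EReal.rec with
    | bot => exact absurd hb (lt_irrefl _)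
    | coe r =>
        exact ⟨((r - 1 : ℝ) : EReal), ⟨r - 1, Set.mem_univ _, rfl⟩,
          EReal.coe_lt_coe_iff.mpr (sub_one_lt r)⟩
    | top => exact ⟨((0:ℝ) : EReal), ⟨0, Set.mem_univ _, rfl⟩, EReal.coe_lt_top 0⟩
  · refine le_antisymm ?_ ?_
    · rw [DmaxChan]
      refine iSup_le fun φ => ?_
      unfold Dmax
      refine sInf_le_sInf (Set.image_mono ?_)
      intro l hl
      simp only [Set.mem_setOf_eq] at hl ⊢
      set cl : ℂ := (((2:ℝ)^l : ℝ) : ℂ) with hcl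
      have hchoi : choi (⇑(cl • F - E)) = (2:ℝ)^l • choi (⇑F) - choi (⇑E) := by
        show matTensorMap (⇑(cl • F - E)) (omegaProj n) = _
        rw [matTensorMap_sub_smul, real_smul_matrix ((2:ℝ)^l) (choi (⇑F))]
        rfl
      have hJG : (choi (⇑(cl • F - E))).PosSemidef := by rw [hchoi]; exact hl
      have hres := matTensorMap_psd (cl • F - E) hJG φ.2.1
      rw [matTensorMap_sub_smul] at hres
      rwa [real_smul_matrix]
    · set c : ℝ := ((Fintype.card n : ℝ))⁻¹ with hc
      have hcardpos : (0:ℝ) < (Fintype.card n : ℝ) := by exact_mod_cast Fintype.card_pos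
      have hcpos : 0 < c := inv_pos.mpr hcardpos
      have hden : IsDensity ((c : ℂ) • omegaProj n) := by
        refine ⟨psd_smul omegaProj_psd hcpos.le, ?_⟩
        rw [Matrix.trace_smul, trace_omegaProj, smul_eq_mul, hc]
        push_cast
        rw [inv_mul_cancel₀]
        exact_mod_cast hcardpos.ne'
      have hkey : Dmax (choi (⇑E)) (choi (⇑F)) =
          Dmax (matTensorMap (⇑E) ((c:ℂ) • omegaProj n))
            (matTensorMap (⇑F) ((c:ℂ) • omegaProj n)) := by
        rw [matTensorMap_csmul, matTensorMap_csmul]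
        exact (Dmax_smul hcpos (choi (⇑E)) (choi (⇑F))).symm
      rw [hkey, DmaxChan]
      exact le_iSup (fun φ : {φ : Matrix (n × n) (n × n) ℂ // IsDensity φ} =>
        Dmax (matTensorMap (⇑E) φ.1) (matTensorMap (⇑F) φ.1)) ⟨_, hden⟩


end QIT
end
end
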